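/- With Q(λ) as above, q = p + C(n−1,t) + n − 2, and assuming Σ_{i=1}^q b_i − Σ_{i=1}^p a_i = n² − (2+d)n + c + d + C(n−2,t−1) + C(n−1,t)t, one has Q''(1) = 0 if and only if Σ_{i=1}^q b_i² − Σ_{i=1}^p a_i² = n³ − (3+2d)n² + (d²+4d+1)n − c² − d² + C(n−1,t)(t+1)² − C(n−2,t)(2t+1) − 2C(n−3,t−1). -/

import Mathlib

open Finset

/-! ### Combinatorial lemmas -/

lemma alt_head (M : ℕ) : ∀ s : ℕ,
    ∑ i ∈ range (s + 1), (-1 : ℤ) ^ i * ((M + 1).choose i : ℤ) = (-1) ^ s * (M.choose s : ℤ) := by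
  intro s
  induction s with
  | zero => simp
  | succ r ih =>
    rw [Finset.sum_range_succ, ih, Nat.choose_succ_succ M r]
    push_cast
    ring

lemma alt_range (M s : ℕ) :
    ∑ i ∈ range s, (-1 : ℤ) ^ i * ((M + 1).choose i : ℤ)
      = (-1) ^ (s + 1) * (((M + 1).choose s : ℤ) - (M.choose s : ℤ)) := by
  cases s with
  | zero => simp
  | succ r =>
    rw [alt_head M r, Nat.choose_succ_succ M r]
    push_cast
    ring

lemma alt_Icc (M s : ℕ) (h : s ≤ M + 2) :
    ∑ i ∈ Icc s (M + 1), (-1 : ℤ) ^ i * ((M + 1).choose i : ℤ)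
      = (-1) ^ s * (((M + 1).choose s : ℤ) - (M.choose s : ℤ)) := by
  have hIcc : Icc s (M + 1) = Ico s (M + 2) := (Finset.Ico_add_one_right_eq_Icc s (M + 1)).symm
  have hfull : ∑ i ∈ range (M + 2), (-1 : ℤ) ^ i * ((M + 1).choose i : ℤ) = 0 := by
    have := alt_head M (M + 1)
    rwa [Nat.choose_eq_zero_of_lt (Nat.lt_succ_self M), Nat.cast_zero, mul_zero] at this
  rw [hIcc, Finset.sum_Ico_eq_sub _ h, hfull, alt_range]
  ring

lemma sum_Icc_shift (f : ℕ → ℤ) (u v : ℕ) :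
    ∑ i ∈ Icc (u + 1) (v + 1), f i = ∑ i ∈ Icc u v, f (i + 1) := by
  rw [← Finset.map_add_right_Icc u v 1, Finset.sum_map]
  rfl

lemma tail0 (m s : ℕ) (hs : s ≤ m + 2) :
    ∑ i ∈ Icc (s + 2) (m + 3), (-1 : ℤ) ^ i * ((m + 3).choose i : ℤ)
      = (-1) ^ s * ((m + 2).choose (s + 1) : ℤ) := by
  have h := alt_Icc (m + 2) (s + 2) (by omega)
  rw [show m + 2 + 1 = m + 3 from rfl] at h
  rw [h, Nat.choose_succ_succ (m + 2) (s + 1)]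
  push_cast
  ring

lemma tail1 (m s : ℕ) (hs : s ≤ m + 2) :
    ∑ i ∈ Icc (s + 2) (m + 3), (-1 : ℤ) ^ i * ((m + 3).choose i : ℤ) * (i : ℤ)
      = (-1) ^ s * ((m : ℤ) + 3) * ((m + 1).choose s : ℤ) := by
  rw [show s + 2 = (s + 1) + 1 from rfl, show m + 3 = (m + 2) + 1 from rfl,
    sum_Icc_shift (fun i => (-1 : ℤ) ^ i * ((m + 3).choose i : ℤ) * (i : ℤ)) (s + 1) (m + 2)]
  have hterm : ∀ j ∈ Icc (s + 1) (m + 2),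
      (-1 : ℤ) ^ (j + 1) * ((m + 3).choose (j + 1) : ℤ) * ((j + 1 : ℕ) : ℤ)
        = (-((m : ℤ) + 3)) * ((-1) ^ j * ((m + 2).choose j : ℤ)) := by
    intro j hj
    have h : ((m + 2 + 1) * (m + 2).choose j : ℕ) = ((m + 3).choose (j + 1) * (j + 1) : ℕ) :=
      Nat.add_one_mul_choose_eq (m + 2) j
    have h' : ((m : ℤ) + 3) * ((m + 2).choose j : ℤ) = ((m + 3).choose (j + 1) : ℤ) * ((j : ℤ) + 1) := by
      exact_mod_cast h
    push_cast
    linear_combination (-1 : ℤ) ^ j * h'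
  rw [Finset.sum_congr rfl hterm, ← Finset.mul_sum]
  have h2 := alt_Icc (m + 1) (s + 1) (by omega)
  rw [show m + 1 + 1 = m + 2 from rfl] at h2
  rw [h2, Nat.choose_succ_succ (m + 1) s]
  push_cast
  ring

lemma tail2 (m s : ℕ) (hs : s ≤ m + 2) :
    ∑ i ∈ Icc (s + 2) (m + 3), (-1 : ℤ) ^ i * ((m + 3).choose i : ℤ) * ((i : ℤ) * (i : ℤ))
      = (-1) ^ s * ((m : ℤ) + 3) *
          (((m : ℤ) + 3) * ((m + 1).choose s : ℤ) - ((m : ℤ) + 2) * (m.choose s : ℤ)) := by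
  rw [show s + 2 = (s + 1) + 1 from rfl, show m + 3 = (m + 2) + 1 from rfl,
    sum_Icc_shift (fun i => (-1 : ℤ) ^ i * ((m + 3).choose i : ℤ) * ((i : ℤ) * (i : ℤ))) (s + 1) (m + 2)]
  have hterm : ∀ j ∈ Icc (s + 1) (m + 2),
      (-1 : ℤ) ^ (j + 1) * ((m + 3).choose (j + 1) : ℤ) * (((j + 1 : ℕ) : ℤ) * ((j + 1 : ℕ) : ℤ))
        = (-((m : ℤ) + 3)) * ((-1) ^ j * ((m + 2).choose j : ℤ) * (j : ℤ))
          + (-((m : ℤ) + 3)) * ((-1) ^ j * ((m + 2).choose j : ℤ)) := by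
    intro j hj
    have h : ((m + 2 + 1) * (m + 2).choose j : ℕ) = ((m + 3).choose (j + 1) * (j + 1) : ℕ) :=
      Nat.add_one_mul_choose_eq (m + 2) j
    have h' : ((m : ℤ) + 3) * ((m + 2).choose j : ℤ) = ((m + 3).choose (j + 1) : ℤ) * ((j : ℤ) + 1) := by
      exact_mod_cast h
    push_cast
    linear_combination ((-1 : ℤ) ^ j * ((j : ℤ) + 1)) * h'
  rw [Finset.sum_congr rfl hterm, Finset.sum_add_distrib, ← Finset.mul_sum, ← Finset.mul_sum]
  -- second sum
  have h2 := alt_Icc (m + 1) (s + 1) (by omega)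
  rw [show m + 1 + 1 = m + 2 from rfl] at h2
  -- first sum : ∑ j ∈ Icc (s+1) (m+2), (-1)^j * C(m+2,j) * j
  have hfirst : ∑ j ∈ Icc (s + 1) (m + 2), (-1 : ℤ) ^ j * ((m + 2).choose j : ℤ) * (j : ℤ)
      = -((m : ℤ) + 2) * ((-1) ^ s * (((m + 1).choose s : ℤ) - (m.choose s : ℤ))) := by
    rw [show s + 1 = s + 1 from rfl, show m + 2 = (m + 1) + 1 from rfl,
      sum_Icc_shift (fun j => (-1 : ℤ) ^ j * (((m + 1) + 1).choose j : ℤ) * (j : ℤ)) s (m + 1)]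
    have hterm2 : ∀ k ∈ Icc s (m + 1),
        (-1 : ℤ) ^ (k + 1) * ((m + 2).choose (k + 1) : ℤ) * ((k + 1 : ℕ) : ℤ)
          = (-((m : ℤ) + 2)) * ((-1) ^ k * ((m + 1).choose k : ℤ)) := by
      intro k hk
      have h : ((m + 1 + 1) * (m + 1).choose k : ℕ) = ((m + 2).choose (k + 1) * (k + 1) : ℕ) :=
        Nat.add_one_mul_choose_eq (m + 1) k
      have h' : ((m : ℤ) + 2) * ((m + 1).choose k : ℤ) = ((m + 2).choose (k + 1) : ℤ) * ((k : ℤ) + 1) := by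
        exact_mod_cast h
      push_cast
      linear_combination (-1 : ℤ) ^ k * h'
    rw [Finset.sum_congr rfl hterm2, ← Finset.mul_sum]
    have h3 := alt_Icc m s (by omega)
    rw [h3]
  rw [hfirst, h2, Nat.choose_succ_succ (m + 1) s]
  push_cast
  ring

/-! ### Calculus helpers -/

lemma hd_rzpow (r : ℝ) (k : ℤ) {x : ℝ} (hx : x ≠ 0) :
    HasDerivAt (fun y : ℝ => r * y ^ k) (r * (k : ℝ) * x ^ (k - 1)) x := by
  simpa [mul_assoc] using (hasDerivAt_zpow k x (Or.inl hx)).const_mul r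

/-- The numerator `Q(λ)` of the Hilbert series:
`Q(λ) = 1 − n λ^{n−1+c−d} + λ^{n+c−d} + Σ λ^{b_i+c} − Σ λ^{a_i+c}
  + (−1)^t λ^c Σ_{i=t+1}^n (−1)^i C(n,i) λ^i`, viewed as a function of a real variable
(so that the second formal derivative of the Laurent polynomial at `1` is
`deriv (deriv ·)` at `1`). -/
noncomputable def hilbQ (n t : ℕ) (c d : ℤ) (p q : ℕ) (a : Fin p → ℤ) (b : Fin q → ℤ) :
    ℝ → ℝ := fun x =>
  1 - (n : ℝ) * x ^ ((n : ℤ) - 1 + c - d) + x ^ ((n : ℤ) + c - d)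
    + ∑ i, x ^ (b i + c) - ∑ i, x ^ (a i + c)
    + (-1 : ℝ) ^ t * x ^ c *
        ∑ i ∈ Finset.Icc (t + 1) n, (-1 : ℝ) ^ i * (n.choose i : ℝ) * x ^ (i : ℤ)

/-- With `q = p + C(n−1,t) + n − 2` and
`Σ b_i − Σ a_i = n² − (2+d)n + c + d + C(n−2,t−1) + C(n−1,t)t`, one has `Q''(1) = 0` iff
`Σ b_i² − Σ a_i² = n³ − (3+2d)n² + (d²+4d+1)n − c² − d² + C(n−1,t)(t+1)²
  − C(n−2,t)(2t+1) − 2C(n−3,t−1)`. -/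
theorem stmt_11 (n t : ℕ) (c d : ℤ) (p q : ℕ) (a : Fin p → ℤ) (b : Fin q → ℤ)
    (hn : 3 ≤ n) (ht : 1 ≤ t) (htn : t ≤ n - 1)
    (hq : q = p + (n - 1).choose t + n - 2)
    (h1 : (∑ i, b i) - (∑ i, a i) =
      (n : ℤ) ^ 2 - (2 + d) * n + c + d + ((n - 2).choose (t - 1) : ℤ) +
        ((n - 1).choose t : ℤ) * t) :
    deriv (deriv (hilbQ n t c d p q a b)) 1 = 0 ↔
      (∑ i, (b i) ^ 2) - (∑ i, (a i) ^ 2) =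
        (n : ℤ) ^ 3 - (3 + 2 * d) * (n : ℤ) ^ 2 + (d ^ 2 + 4 * d + 1) * n - c ^ 2 - d ^ 2 +
          ((n - 1).choose t : ℤ) * ((t : ℤ) + 1) ^ 2 -
          ((n - 2).choose t : ℤ) * (2 * (t : ℤ) + 1) -
          2 * ((n - 3).choose (t - 1) : ℤ) := by
  obtain ⟨s, rfl⟩ : ∃ s, t = s + 1 := ⟨t - 1, by omega⟩
  obtain ⟨m, rfl⟩ : ∃ m, n = m + 3 := ⟨n - 3, by omega⟩
  simp only [show m + 3 - 1 = m + 2 from rfl, show m + 3 - 2 = m + 1 from rfl,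
    show m + 3 - 3 = m from rfl, show s + 1 - 1 = s from rfl] at h1 hq htn ⊢
  have hs' : s ≤ m + 1 := by omega
  have hs : s ≤ m + 2 := by omega
  have hqZ : (q : ℤ) = (p : ℤ) + ((m + 2).choose (s + 1) : ℤ) + (m : ℤ) + 1 := by omega
  -- step 1: nicer form of hilbQ near 1
  have hEq : hilbQ (m + 3) (s + 1) c d p q a b =ᶠ[nhds (1 : ℝ)] (fun x : ℝ =>
      1 - ((m + 3 : ℕ) : ℝ) * x ^ (((m + 3 : ℕ) : ℤ) - 1 + c - d) + x ^ (((m + 3 : ℕ) : ℤ) + c - d)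
        + ∑ i, x ^ (b i + c) - ∑ i, x ^ (a i + c)
        + ∑ i ∈ Finset.Icc (s + 1 + 1) (m + 3),
            (-1 : ℝ) ^ (s + 1) * ((-1 : ℝ) ^ i * (((m + 3).choose i : ℕ) : ℝ)) * x ^ (c + (i : ℤ))) := by
    filter_upwards [eventually_ne_nhds (one_ne_zero (α := ℝ))] with x hx
    simp only [hilbQ]
    congr 1
    rw [Finset.mul_sum]
    refine Finset.sum_congr rfl fun i _ => ?_
    rw [zpow_add₀ hx]
    ring
  -- step 2: first derivative
  have hQN' : ∀ x : ℝ, x ≠ 0 → HasDerivAt (fun x : ℝ =>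
      1 - ((m + 3 : ℕ) : ℝ) * x ^ (((m + 3 : ℕ) : ℤ) - 1 + c - d) + x ^ (((m + 3 : ℕ) : ℤ) + c - d)
        + ∑ i, x ^ (b i + c) - ∑ i, x ^ (a i + c)
        + ∑ i ∈ Finset.Icc (s + 1 + 1) (m + 3),
            (-1 : ℝ) ^ (s + 1) * ((-1 : ℝ) ^ i * (((m + 3).choose i : ℕ) : ℝ)) * x ^ (c + (i : ℤ)))
      (0 - ((m + 3 : ℕ) : ℝ) * ((((m + 3 : ℕ) : ℤ) - 1 + c - d : ℤ) : ℝ) * x ^ (((m + 3 : ℕ) : ℤ) - 1 + c - d - 1)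
        + ((((m + 3 : ℕ) : ℤ) + c - d : ℤ) : ℝ) * x ^ (((m + 3 : ℕ) : ℤ) + c - d - 1)
        + ∑ i, ((b i + c : ℤ) : ℝ) * x ^ (b i + c - 1)
        - ∑ i, ((a i + c : ℤ) : ℝ) * x ^ (a i + c - 1)
        + ∑ i ∈ Finset.Icc (s + 1 + 1) (m + 3),
            (-1 : ℝ) ^ (s + 1) * ((-1 : ℝ) ^ i * (((m + 3).choose i : ℕ) : ℝ)) * ((c + (i : ℤ) : ℤ) : ℝ) * x ^ (c + (i : ℤ) - 1)) x := by
    intro x hx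
    exact (((((hasDerivAt_const x (1 : ℝ)).sub (hd_rzpow _ _ hx)).add
        (hasDerivAt_zpow _ x (Or.inl hx))).add
        (HasDerivAt.fun_sum fun i _ => hasDerivAt_zpow _ x (Or.inl hx))).sub
        (HasDerivAt.fun_sum fun i _ => hasDerivAt_zpow _ x (Or.inl hx))).add
        (HasDerivAt.fun_sum fun i _ => hd_rzpow _ _ hx)
  have hEqd : deriv (hilbQ (m + 3) (s + 1) c d p q a b) =ᶠ[nhds (1 : ℝ)] (fun x : ℝ =>
      0 - ((m + 3 : ℕ) : ℝ) * ((((m + 3 : ℕ) : ℤ) - 1 + c - d : ℤ) : ℝ) * x ^ (((m + 3 : ℕ) : ℤ) - 1 + c - d - 1)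
        + ((((m + 3 : ℕ) : ℤ) + c - d : ℤ) : ℝ) * x ^ (((m + 3 : ℕ) : ℤ) + c - d - 1)
        + ∑ i, ((b i + c : ℤ) : ℝ) * x ^ (b i + c - 1)
        - ∑ i, ((a i + c : ℤ) : ℝ) * x ^ (a i + c - 1)
        + ∑ i ∈ Finset.Icc (s + 1 + 1) (m + 3),
            (-1 : ℝ) ^ (s + 1) * ((-1 : ℝ) ^ i * (((m + 3).choose i : ℕ) : ℝ)) * ((c + (i : ℤ) : ℤ) : ℝ) * x ^ (c + (i : ℤ) - 1)) := by
    filter_upwards [hEq.deriv, eventually_ne_nhds (one_ne_zero (α := ℝ))] with x hdx hx0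
    rw [hdx, (hQN' x hx0).deriv]
  -- step 3: value of the second derivative at 1
  have hval : deriv (deriv (hilbQ (m + 3) (s + 1) c d p q a b)) 1 =
      (((0 - ((m + 3 : ℕ) : ℤ) * (((m + 3 : ℕ) : ℤ) - 1 + c - d) * (((m + 3 : ℕ) : ℤ) - 1 + c - d - 1)
        + (((m + 3 : ℕ) : ℤ) + c - d) * (((m + 3 : ℕ) : ℤ) + c - d - 1)
        + ∑ i, (b i + c) * (b i + c - 1)
        - ∑ i, (a i + c) * (a i + c - 1)
        + ∑ i ∈ Finset.Icc (s + 1 + 1) (m + 3),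
            (-1 : ℤ) ^ (s + 1) * ((-1 : ℤ) ^ i * (((m + 3).choose i : ℕ) : ℤ)) * (c + (i : ℤ)) * (c + (i : ℤ) - 1)) : ℤ) : ℝ) := by
    rw [hEqd.deriv_eq]
    have h2 : HasDerivAt (fun x : ℝ =>
        0 - ((m + 3 : ℕ) : ℝ) * ((((m + 3 : ℕ) : ℤ) - 1 + c - d : ℤ) : ℝ) * x ^ (((m + 3 : ℕ) : ℤ) - 1 + c - d - 1)
          + ((((m + 3 : ℕ) : ℤ) + c - d : ℤ) : ℝ) * x ^ (((m + 3 : ℕ) : ℤ) + c - d - 1)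
          + ∑ i, ((b i + c : ℤ) : ℝ) * x ^ (b i + c - 1)
          - ∑ i, ((a i + c : ℤ) : ℝ) * x ^ (a i + c - 1)
          + ∑ i ∈ Finset.Icc (s + 1 + 1) (m + 3),
              (-1 : ℝ) ^ (s + 1) * ((-1 : ℝ) ^ i * (((m + 3).choose i : ℕ) : ℝ)) * ((c + (i : ℤ) : ℤ) : ℝ) * x ^ (c + (i : ℤ) - 1))
        (0 - ((m + 3 : ℕ) : ℝ) * ((((m + 3 : ℕ) : ℤ) - 1 + c - d : ℤ) : ℝ) * ((((m + 3 : ℕ) : ℤ) - 1 + c - d - 1 : ℤ) : ℝ) * (1 : ℝ) ^ (((m + 3 : ℕ) : ℤ) - 1 + c - d - 1 - 1)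
          + ((((m + 3 : ℕ) : ℤ) + c - d : ℤ) : ℝ) * ((((m + 3 : ℕ) : ℤ) + c - d - 1 : ℤ) : ℝ) * (1 : ℝ) ^ (((m + 3 : ℕ) : ℤ) + c - d - 1 - 1)
          + ∑ i, ((b i + c : ℤ) : ℝ) * ((b i + c - 1 : ℤ) : ℝ) * (1 : ℝ) ^ (b i + c - 1 - 1)
          - ∑ i, ((a i + c : ℤ) : ℝ) * ((a i + c - 1 : ℤ) : ℝ) * (1 : ℝ) ^ (a i + c - 1 - 1)
          + ∑ i ∈ Finset.Icc (s + 1 + 1) (m + 3),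
              (-1 : ℝ) ^ (s + 1) * ((-1 : ℝ) ^ i * (((m + 3).choose i : ℕ) : ℝ)) * ((c + (i : ℤ) : ℤ) : ℝ) * ((c + (i : ℤ) - 1 : ℤ) : ℝ) * (1 : ℝ) ^ (c + (i : ℤ) - 1 - 1)) 1 := by
      exact (((((hasDerivAt_const (1 : ℝ) (0 : ℝ)).sub (hd_rzpow _ _ one_ne_zero)).add
          (hd_rzpow _ _ one_ne_zero)).add
          (HasDerivAt.fun_sum fun i _ => hd_rzpow _ _ one_ne_zero)).sub
          (HasDerivAt.fun_sum fun i _ => hd_rzpow _ _ one_ne_zero)).add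
          (HasDerivAt.fun_sum fun i _ => hd_rzpow _ _ one_ne_zero)
    rw [h2.deriv]
    push_cast [one_zpow, mul_one]
    ring_nf
  rw [hval, Int.cast_eq_zero]
  -- step 4: arithmetic
  have hsgn : (-1 : ℤ) ^ (s + 1) * (-1 : ℤ) ^ s = -1 := by
    rw [← pow_add]
    exact Odd.neg_one_pow ⟨s, by ring⟩
  have hSb : (∑ i, (b i + c) * (b i + c - 1)) =
      (∑ i, (b i) ^ 2) + (2 * c - 1) * (∑ i, b i) + (q : ℤ) * (c ^ 2 - c) := by
    rw [Finset.sum_congr rfl (fun i _ =>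
      (show (b i + c) * (b i + c - 1) = (b i) ^ 2 + ((2 * c - 1) * b i + (c ^ 2 - c)) by ring)),
      Finset.sum_add_distrib, Finset.sum_add_distrib, ← Finset.mul_sum, Finset.sum_const,
      Finset.card_univ, Fintype.card_fin, nsmul_eq_mul]
    ring
  have hSa : (∑ i, (a i + c) * (a i + c - 1)) =
      (∑ i, (a i) ^ 2) + (2 * c - 1) * (∑ i, a i) + (p : ℤ) * (c ^ 2 - c) := by
    rw [Finset.sum_congr rfl (fun i _ =>
      (show (a i + c) * (a i + c - 1) = (a i) ^ 2 + ((2 * c - 1) * a i + (c ^ 2 - c)) by ring)),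
      Finset.sum_add_distrib, Finset.sum_add_distrib, ← Finset.mul_sum, Finset.sum_const,
      Finset.card_univ, Fintype.card_fin, nsmul_eq_mul]
    ring
  have hT : (∑ i ∈ Finset.Icc (s + 1 + 1) (m + 3),
      (-1 : ℤ) ^ (s + 1) * ((-1 : ℤ) ^ i * (((m + 3).choose i : ℕ) : ℤ)) * (c + (i : ℤ)) * (c + (i : ℤ) - 1))
      = -(((m : ℤ) + 3) * (((m : ℤ) + 3) * ((m + 1).choose s : ℤ) - ((m : ℤ) + 2) * (m.choose s : ℤ))
          + (2 * c - 1) * (((m : ℤ) + 3) * ((m + 1).choose s : ℤ))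
          + (c ^ 2 - c) * ((m + 2).choose (s + 1) : ℤ)) := by
    rw [Finset.sum_congr rfl (fun i _ =>
      (show (-1 : ℤ) ^ (s + 1) * ((-1 : ℤ) ^ i * (((m + 3).choose i : ℕ) : ℤ)) * (c + (i : ℤ)) * (c + (i : ℤ) - 1)
        = (-1 : ℤ) ^ (s + 1) * ((-1 : ℤ) ^ i * (((m + 3).choose i : ℕ) : ℤ) * ((i : ℤ) * (i : ℤ))
            + ((2 * c - 1) * ((-1 : ℤ) ^ i * (((m + 3).choose i : ℕ) : ℤ) * (i : ℤ))
              + (c ^ 2 - c) * ((-1 : ℤ) ^ i * (((m + 3).choose i : ℕ) : ℤ)))) by ring)),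
      ← Finset.mul_sum, Finset.sum_add_distrib, Finset.sum_add_distrib,
      ← Finset.mul_sum, ← Finset.mul_sum]
    rw [show s + 1 + 1 = s + 2 from rfl, tail2 m s hs, tail1 m s hs, tail0 m s hs]
    linear_combination (((m : ℤ) + 3) * (((m : ℤ) + 3) * ((m + 1).choose s : ℤ) - ((m : ℤ) + 2) * (m.choose s : ℤ))
          + (2 * c - 1) * (((m : ℤ) + 3) * ((m + 1).choose s : ℤ))
          + (c ^ 2 - c) * ((m + 2).choose (s + 1) : ℤ)) * hsgn
  rw [hSb, hSa, hT]
  have hA1 : ((m : ℤ) + 2) * ((m + 1).choose s : ℤ) = ((m + 2).choose (s + 1) : ℤ) * ((s : ℤ) + 1) := by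
    exact_mod_cast Nat.add_one_mul_choose_eq (m + 1) s
  have hA2 : ((m : ℤ) + 1) * (m.choose s : ℤ) = ((m + 1).choose (s + 1) : ℤ) * ((s : ℤ) + 1) := by
    exact_mod_cast Nat.add_one_mul_choose_eq m s
  have hP1 : ((m + 2).choose (s + 1) : ℤ) = ((m + 1).choose s : ℤ) + ((m + 1).choose (s + 1) : ℤ) := by
    exact_mod_cast Nat.choose_succ_succ (m + 1) s
  have hB : (m.choose s : ℤ) * ((m : ℤ) + 1) = ((m + 1).choose s : ℤ) * (((m : ℤ) + 1) - (s : ℤ)) := by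
    have h := Nat.choose_mul_succ_eq m s
    zify [hs'] at h
    exact h
  constructor
  · intro h
    push_cast at h h1 hqZ ⊢
    linear_combination h - (2 * c - 1) * h1 - (c ^ 2 - c) * hqZ + ((s : ℤ) + 2 + 2 * c) * hA1
      - 2 * hA2 - hP1 - ((m : ℤ) + 2) * hB
  · intro h
    push_cast at h h1 hqZ ⊢
    linear_combination h + (2 * c - 1) * h1 + (c ^ 2 - c) * hqZ - ((s : ℤ) + 2 + 2 * c) * hA1
      + 2 * hA2 + hP1 + ((m : ℤ) + 2) * hB
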